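/- Any deterministic LOCAL algorithm that computes a ρ-approximate maximum cardinality matching on n-vertex ring graphs requires Ω((log* n)/ρ) rounds. -/

import Mathlib

/-- The iterated logarithm `log* n`. -/
def logStar (n : ℕ) : ℕ :=
  if h : n ≤ 1 then 0 else logStar (Nat.log 2 n) + 1
decreasing_by
  exact Nat.log_lt_self 2 (by omega)

/-- The decision of a `t`-round deterministic LOCAL algorithm `A` for the ring edge
`(v, v+1)`, as a function of the IDs in the radius-`t` window around the edge. -/
def edgeChosen (A : List ℕ → Bool) (t : ℕ) {m : ℕ} (id : ZMod m → ℕ) (v : ZMod m) : Bool :=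
  A ((List.range (2 * t + 2)).map fun j => id (v - (t : ZMod m) + (j : ZMod m)))

/-- Validity of a `t`-round LOCAL algorithm on the `m`-vertex ring with IDs below `N`:
for every assignment of distinct IDs, the chosen edge set is a matching of size at least
`⌊m/2⌋/ρ` (a `ρ`-approximate maximum cardinality matching). -/
def ringValid (A : List ℕ → Bool) (t : ℕ) (ρ : ℝ) (N : ℕ) (m : ℕ) [NeZero m] : Prop :=
  ∀ id : ZMod m → ℕ, Function.Injective id → (∀ v, id v < N) →
    (∀ v : ZMod m, edgeChosen A t id v = true → edgeChosen A t id (v + 1) = true → False) ∧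
    ((m / 2 : ℕ) : ℝ) / ρ ≤
      ((Finset.univ.filter (fun v : ZMod m => edgeChosen A t id v = true)).card : ℝ)

lemma logStar_eq (n : ℕ) : logStar n = if n ≤ 1 then 0 else logStar (Nat.log 2 n) + 1 := by
  rw [logStar]; split <;> simp_all

lemma logStar_two_pow {a : ℕ} (ha : 1 ≤ a) : logStar (2^a) = logStar a + 1 := by
  rw [logStar_eq]
  have h2 : ¬ (2:ℕ)^a ≤ 1 := by
    have := Nat.one_lt_two_pow_iff (n:=a); omega
  simp [h2, Nat.log_pow]

lemma logStar_mono : ∀ n m : ℕ, m ≤ n → logStar m ≤ logStar n := by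
  intro n
  induction n using Nat.strong_induction_on with
  | _ n ih =>
    intro m hmn
    by_cases hm : m ≤ 1
    · rw [logStar_eq m]; simp [hm]
    · have hn : ¬ n ≤ 1 := by omega
      rw [logStar_eq m, logStar_eq n]
      simp only [hm, hn, if_neg, not_false_iff]
      have h1 : Nat.log 2 n < n := Nat.log_lt_self 2 (by omega)
      have h2 : Nat.log 2 m ≤ Nat.log 2 n := Nat.log_mono_right hmn
      exact Nat.succ_le_succ (ih _ h1 _ h2)

lemma logStar_le_self (n : ℕ) : logStar n ≤ n := by
  induction n using Nat.strong_induction_on with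
  | _ n ih =>
    by_cases hn : n ≤ 1
    · rw [logStar_eq]; simp [hn]
    · rw [logStar_eq]
      simp only [hn, if_neg, not_false_iff]
      have h1 : Nat.log 2 n < n := Nat.log_lt_self 2 (by omega)
      have := ih _ h1
      omega

def twr : ℕ → ℕ → ℕ
  | 0, y => y
  | j+1, y => 2 ^ twr j y

lemma one_le_twr {y : ℕ} (hy : 1 ≤ y) : ∀ j, 1 ≤ twr j y
  | 0 => hy
  | j+1 => Nat.one_le_two_pow

lemma twr_mono {y y' : ℕ} (h : y ≤ y') : ∀ j, twr j y ≤ twr j y'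
  | 0 => h
  | j+1 => Nat.pow_le_pow_right (by norm_num) (twr_mono h j)

lemma twr_add (a b y : ℕ) : twr (a+b) y = twr a (twr b y) := by
  induction a with
  | zero => simp [twr]
  | succ a iha => simp [twr, ← Nat.add_one, Nat.succ_add, iha]
  
lemma logStar_twr_le {y : ℕ} (hy : 1 ≤ y) : ∀ j, logStar (twr j y) ≤ j + logStar y
  | 0 => by simp [twr]
  | j+1 => by
    have h1 : 1 ≤ twr j y := one_le_twr hy j
    have := logStar_two_pow h1
    show logStar (2 ^ twr j y) ≤ (j+1) + logStar y
    rw [this]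
    have := logStar_twr_le hy j
    omega

def Mono (χ : Finset ℕ → Bool) (k : ℕ) (S : Finset ℕ) (c : Bool) : Prop :=
  ∀ T ⊆ S, T.card = k → χ T = c

/-- End-homogeneity invariant: for `k`-subsets `T` of the prefix `P`, the color of
`insert b T` does not depend on `b`, for `b` in `P ∪ V` above `T`. -/
def EHInv (χ : Finset ℕ → Bool) (k : ℕ) (P V : Finset ℕ) : Prop :=
  ∀ T ⊆ P, T.card = k → ∀ b b', b ∈ P ∪ V → b' ∈ P ∪ V →
    (∀ x ∈ T, x < b) → (∀ x ∈ T, x < b') → χ (insert b T) = χ (insert b' T)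

def Below (P V : Finset ℕ) : Prop := ∀ p ∈ P, ∀ v ∈ V, p < v

lemma Inv_mono_right {χ k} {P V V' : Finset ℕ} (h : V' ⊆ V) (hI : EHInv χ k P V) :
    EHInv χ k P V' := by
  intro T hT hc b b' hb hb' h1 h2
  exact hI T hT hc b b' (Finset.union_subset_union_right h hb)
    (Finset.union_subset_union_right h hb') h1 h2

/-- sizes needed for the chain construction -/
def ns (K : ℕ) : ℕ → ℕ
  | 0 => 0
  | j+1 => K * ns K j + 1

lemma chain (χ : Finset ℕ → Bool) (k r₀ : ℕ) :
    ∀ (r : ℕ) (P V : Finset ℕ), P.card + r ≤ r₀ → Below P V → EHInv χ k P V →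
      ns (2^(2^r₀)) r ≤ V.card →
      ∃ c : Finset ℕ, c ⊆ V ∧ c.card = r ∧ EHInv χ k (P ∪ c) ∅ := by
  intro r
  induction r with
  | zero =>
    intro P V _ _ hI _
    exact ⟨∅, by simp, by simp, by simpa using Inv_mono_right (Finset.empty_subset V) hI⟩
  | succ r ih =>
    intro P V hr hB hI hV
    set K := 2^(2^r₀) with hK
    have hVne : V.Nonempty := by
      rw [← Finset.card_pos]
      have : 1 ≤ ns K (r+1) := by simp [ns]
      omega
    set a := V.min' hVne with ha
    have haV : a ∈ V := V.min'_mem hVne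
    have haP : a ∉ P := fun h => lt_irrefl a (hB a h a haV)
    set P' := insert a P with hP'
    set V₁ := V.erase a with hV₁
    set F : ℕ → Finset (Finset ℕ) :=
      fun b => P'.powerset.filter (fun T => T.card = k ∧ χ (insert b T) = true) with hF
    have hmaps : ∀ b ∈ V₁, F b ∈ P'.powerset.powerset := by
      intro b _
      exact Finset.mem_powerset.2 (Finset.filter_subset _ _)
    have htne : (P'.powerset.powerset).Nonempty := ⟨∅, by simp⟩
    have hcardP' : P'.card = P.card + 1 := Finset.card_insert_of_notMem haP
    have htcard : (P'.powerset.powerset).card ≤ K := by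
      rw [Finset.card_powerset, Finset.card_powerset, hcardP']
      exact Nat.pow_le_pow_right (by norm_num)
        (Nat.pow_le_pow_right (by norm_num) (by omega))
    have hV₁card : K * ns K r ≤ V₁.card := by
      have : V₁.card = V.card - 1 := Finset.card_erase_of_mem haV
      have h2 : ns K (r+1) = K * ns K r + 1 := rfl
      omega
    obtain ⟨y, -, hy⟩ := Finset.exists_le_card_fiber_of_mul_le_card_of_maps_to hmaps htne
      (le_trans (Nat.mul_le_mul_right _ htcard) hV₁card)
    set V₂ := V₁.filter (fun b => F b = y) with hV₂
    have hV₂V₁ : V₂ ⊆ V₁ := Finset.filter_subset _ _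
    have hV₂V : V₂ ⊆ V := hV₂V₁.trans (Finset.erase_subset _ _)
    -- invariants for recursive call
    have hB' : Below P' V₂ := by
      intro p hp v hv
      have hvV₁ : v ∈ V₁ := hV₂V₁ hv
      rcases Finset.mem_insert.1 hp with rfl | hpP
      · exact lt_of_le_of_ne (V.min'_le v (hV₂V hv)) (Ne.symm (Finset.ne_of_mem_erase hvV₁))
      · exact hB p hpP v (hV₂V hv)
    have hI' : EHInv χ k P' V₂ := by
      intro T hT hc b b' hb hb' h1 h2
      by_cases haT : a ∈ T
      · -- both b, b' must be in V₂
        have hbV₂ : ∀ x, x ∈ P' ∪ V₂ → (∀ z ∈ T, z < x) → x ∈ V₂ := by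
          intro x hx hlt
          rcases Finset.mem_union.1 hx with hxP' | hxV₂
          · rcases Finset.mem_insert.1 hxP' with rfl | hxP
            · exact absurd (hlt a haT) (lt_irrefl a)
            · exact absurd (hlt a haT) (not_lt.2 (le_of_lt (hB x hxP a haV)))
          · exact hxV₂
        have hbb := hbV₂ b hb h1
        have hbb' := hbV₂ b' hb' h2
        have hFb : F b = y := (Finset.mem_filter.1 hbb).2
        have hFb' : F b' = y := (Finset.mem_filter.1 hbb').2
        have hTP' : T ∈ P'.powerset := Finset.mem_powerset.2 hT
        have hiff : (χ (insert b T) = true) ↔ (χ (insert b' T) = true) := by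
          constructor
          · intro h
            have : T ∈ F b := Finset.mem_filter.2 ⟨hTP', hc, h⟩
            rw [hFb, ← hFb'] at this
            exact (Finset.mem_filter.1 this).2.2
          · intro h
            have : T ∈ F b' := Finset.mem_filter.2 ⟨hTP', hc, h⟩
            rw [hFb', ← hFb] at this
            exact (Finset.mem_filter.1 this).2.2
        cases hcb : χ (insert b T) <;> cases hcb' : χ (insert b' T) <;> simp_all
      · have hTP : T ⊆ P := by
          intro x hx
          rcases Finset.mem_insert.1 (hT hx) with rfl | h
          · exact absurd hx haT
          · exact h
        have hsub : P' ∪ V₂ ⊆ P ∪ V := by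
          intro x hx
          rcases Finset.mem_union.1 hx with hxP' | hxV₂
          · rcases Finset.mem_insert.1 hxP' with rfl | hxP
            · exact Finset.mem_union_right _ haV
            · exact Finset.mem_union_left _ hxP
          · exact Finset.mem_union_right _ (hV₂V hxV₂)
        exact hI T hTP hc b b' (hsub hb) (hsub hb') h1 h2
    obtain ⟨c', hc'sub, hc'card, hc'inv⟩ := ih P' V₂ (by omega) hB' hI' hy
    refine ⟨insert a c', Finset.insert_subset haV (hc'sub.trans hV₂V), ?_, ?_⟩
    · have : a ∉ c' := fun h => Finset.notMem_erase a V (hc'sub.trans hV₂V₁ h)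
      rw [Finset.card_insert_of_notMem this, hc'card]
    · have : P ∪ insert a c' = P' ∪ c' := by
        rw [hP', Finset.insert_union, Finset.union_insert]
      rwa [this]

def Rnum : ℕ → ℕ → ℕ
  | 0, s => s
  | 1, s => 2 * s
  | (k+2), s => ns (2 ^ (2 ^ (Rnum (k+1) s + 1))) (Rnum (k+1) s + 1)

theorem ramsey : ∀ (k : ℕ), 1 ≤ k → ∀ (s : ℕ) (χ : Finset ℕ → Bool) (U : Finset ℕ),
    Rnum k s ≤ U.card → ∃ S c, S ⊆ U ∧ S.card = s ∧ Mono χ k S c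
  | 0, hk => absurd hk (by norm_num)
  | 1, _ => by
    intro s χ U hU
    have hmaps : ∀ b ∈ U, χ {b} ∈ (Finset.univ : Finset Bool) := by simp
    obtain ⟨y, -, hy⟩ := Finset.exists_le_card_fiber_of_mul_le_card_of_maps_to hmaps
      Finset.univ_nonempty (by simpa [Rnum] using hU)
    obtain ⟨S, hS, hScard⟩ := Finset.exists_subset_card_eq hy
    refine ⟨S, y, hS.trans (Finset.filter_subset _ _), hScard, ?_⟩
    intro T hT hTc
    obtain ⟨b, rfl⟩ := Finset.card_eq_one.1 hTc
    have := hS (hT (Finset.mem_singleton_self b))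
    exact (Finset.mem_filter.1 this).2
  | (k+2), _ => by
    intro s χ U hU
    set r₀ := Rnum (k+1) s + 1 with hr₀
    obtain ⟨c, hcU, hccard, hcinv⟩ := chain χ (k+1) r₀ r₀ ∅ U (by simp) (by simp [Below])
      (by intro T hT hTc b b' _ _ _ _; simp_all) (by simpa [Rnum] using hU)
    have hcinv : EHInv χ (k+1) c ∅ := by simpa using hcinv
    have hcne : c.Nonempty := by rw [← Finset.card_pos, hccard]; omega
    set M := c.max' hcne with hM
    set U' := c.erase M with hU'
    have hU'card : U'.card = Rnum (k+1) s := by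
      rw [hU', Finset.card_erase_of_mem (c.max'_mem hcne), hccard]; omega
    obtain ⟨S, cc, hSU', hScard, hSmono⟩ :=
      ramsey (k+1) (by omega) s (fun T => χ (insert M T)) U' (le_of_eq hU'card.symm)
    refine ⟨S, cc, (hSU'.trans (Finset.erase_subset _ _)).trans hcU, hScard, ?_⟩
    intro T hT hTc
    have hTne : T.Nonempty := by rw [← Finset.card_pos, hTc]; omega
    set mT := T.max' hTne with hmT
    have hmTT : mT ∈ T := T.max'_mem hTne
    set T' := T.erase mT with hT'
    have hT'S : T' ⊆ S := (Finset.erase_subset _ _).trans hT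
    have hT'c : T' ⊆ c := fun x hx => (Finset.erase_subset _ _) (hSU' (hT'S hx))
    have hT'card : T'.card = k + 1 := by rw [hT', Finset.card_erase_of_mem hmTT, hTc]; omega
    have hmTc : mT ∈ c := (Finset.erase_subset _ _) (hSU' (hT hmTT))
    have hMc : M ∈ c := c.max'_mem hcne
    have hlt1 : ∀ x ∈ T', x < mT := by
      intro x hx
      exact lt_of_le_of_ne (T.le_max' x (Finset.mem_of_mem_erase hx))
        (Finset.ne_of_mem_erase hx)
    have hlt2 : ∀ x ∈ T', x < M := by
      intro x hx
      have hxc : x ∈ U' := hSU' (hT'S hx)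
      exact lt_of_le_of_ne (c.le_max' x (Finset.mem_of_mem_erase hxc))
        (Finset.ne_of_mem_erase hxc)
    have key : χ (insert mT T') = χ (insert M T') :=
      hcinv T' hT'c hT'card mT M (by simp [hmTc]) (by simp [hMc]) hlt1 hlt2
    rw [← Finset.insert_erase hmTT] at *
    rw [key]
    exact hSmono T' hT'S hT'card

lemma two_mul_add_two_le (r : ℕ) (h : 3 ≤ r) : 2*r+2 ≤ 2^r := by
  induction r with
  | zero => omega
  | succ r ih =>
    rcases Nat.lt_or_ge r 3 with h'|h'
    · interval_cases r <;> simp_all <;> omega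
    · have := ih h'
      have : (2:ℕ)^r ≥ 8 := by
        calc (2:ℕ)^r ≥ 2^3 := Nat.pow_le_pow_right (by norm_num) h'
        _ = 8 := by norm_num
      rw [pow_succ]
      omega

lemma L1 (r : ℕ) (hr : 1 ≤ r) : r * (2^r + 1) + 1 ≤ 2^(2^r) := by
  rcases Nat.lt_or_ge r 3 with h|h
  · interval_cases r <;> norm_num
  · have h1 : r ≤ 2^r := le_of_lt Nat.lt_two_pow_self
    have h2 : 2*r+2 ≤ 2^r := two_mul_add_two_le r h
    calc r * (2^r + 1) + 1 ≤ 2^r * (2^r + 1) + 1 := by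
          exact Nat.add_le_add_right (Nat.mul_le_mul_right _ h1) 1
      _ ≤ 2^r * 2^r + 2^r + 1 := by ring_nf; omega
      _ ≤ 2^(2*r) + 2^(2*r) + 2^(2*r) := by
          have : (2:ℕ)^r ≤ 2^(2*r) := Nat.pow_le_pow_right (by norm_num) (by omega)
          have h4 : (2:ℕ)^r * 2^r = 2^(2*r) := by rw [← pow_add]; ring_nf
          omega
      _ ≤ 4 * 2^(2*r) := by omega
      _ = 2^(2*r+2) := by rw [pow_add]; ring
      _ ≤ 2^(2^r) := Nat.pow_le_pow_right (by norm_num) h2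

lemma ns_le (K : ℕ) (hK : 1 ≤ K) : ∀ j, ns K j ≤ (2*K)^j
  | 0 => by simp [ns]
  | j+1 => by
    have h1 := ns_le K hK j
    have : ns K (j+1) = K * ns K j + 1 := rfl
    rw [this, pow_succ]
    have h2 : K * ns K j ≤ K * (2*K)^j := Nat.mul_le_mul_left _ h1
    have h3 : 0 < (2*K)^j * K := by positivity
    calc K * ns K j + 1 ≤ K * (2*K)^j + (2*K)^j * K := by omega
      _ = (2*K)^j * (2*K) := by ring
      _ ≤ (2*K)^j * (2*K) := le_refl _

lemma Rnum_le_twr : ∀ k, 1 ≤ k → ∀ s, Rnum k s + 1 ≤ twr (3*k) (2*s+2)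
  | 0, hk => absurd hk (by norm_num)
  | 1, _ => by
    intro s
    show 2*s + 1 ≤ twr 3 (2*s+2)
    have h1 : 2*s+2 ≤ twr 3 (2*s+2) := by
      have a1 : (2*s+2 : ℕ) < 2^(2*s+2) := Nat.lt_two_pow_self
      have a2 : (2:ℕ)^(2*s+2) < 2^(2^(2*s+2)) := Nat.lt_two_pow_self
      have a3 : (2:ℕ)^(2^(2*s+2)) < 2^(2^(2^(2*s+2))) := Nat.lt_two_pow_self
      have : twr 3 (2*s+2) = 2^(2^(2^(2*s+2))) := rfl
      omega
    omega
  | (k+2), _ => by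
    intro s
    have ih := Rnum_le_twr (k+1) (by omega) s
    set r₀ := Rnum (k+1) s + 1 with hr₀
    have hr₀1 : 1 ≤ r₀ := by omega
    set K := 2 ^ (2 ^ r₀) with hK
    have hK1 : 1 ≤ K := Nat.one_le_two_pow
    have h1 : Rnum (k+2) s = ns K r₀ := rfl
    have h2 : ns K r₀ ≤ (2*K)^r₀ := ns_le K hK1 r₀
    have h3 : (2*K)^r₀ = 2^(r₀ * (2^r₀ + 1)) := by
      rw [hK, ← pow_succ', ← pow_mul]
      ring
    have h4 : Rnum (k+2) s + 1 ≤ 2^(r₀ * (2^r₀ + 1)) + 1 := by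
      rw [h1]; exact Nat.add_le_add_right (h3 ▸ h2) 1
    have h5 : (2:ℕ)^(r₀ * (2^r₀ + 1)) + 1 ≤ 2^(r₀ * (2^r₀ + 1) + 1) := by
      have heq : (2:ℕ)^(r₀ * (2^r₀ + 1) + 1) = 2^(r₀ * (2^r₀ + 1)) * 2 := pow_succ 2 _
      have h0 : 1 ≤ (2:ℕ)^(r₀ * (2^r₀+1)) := Nat.one_le_two_pow
      omega
    have h6 : r₀ * (2^r₀ + 1) + 1 ≤ 2^(2^r₀) := L1 r₀ hr₀1
    have h7 : Rnum (k+2) s + 1 ≤ 2^(2^(2^r₀)) := by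
      calc Rnum (k+2) s + 1 ≤ 2^(r₀ * (2^r₀ + 1) + 1) := le_trans h4 h5
        _ ≤ 2^(2^(2^r₀)) := Nat.pow_le_pow_right (by norm_num) h6
    have h8 : (2:ℕ)^(2^(2^r₀)) = twr 3 r₀ := rfl
    have h9 : twr 3 r₀ ≤ twr 3 (twr (3*(k+1)) (2*s+2)) := twr_mono ih 3
    have h10 : twr 3 (twr (3*(k+1)) (2*s+2)) = twr (3*(k+2)) (2*s+2) := by
      rw [← twr_add]
      congr 1
      ring
    calc Rnum (k+2) s + 1 ≤ 2^(2^(2^r₀)) := h7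
      _ = twr 3 r₀ := h8
      _ ≤ twr 3 (twr (3*(k+1)) (2*s+2)) := h9
      _ = twr (3*(k+2)) (2*s+2) := h10

lemma edgeChosen_eq (A : List ℕ → Bool) (t m : ℕ) (id : ZMod m → ℕ) (v : ZMod m) :
    edgeChosen A t id v
      = A ((List.range (2*t+2)).map (fun j : ℕ => id (v - (t : ZMod m) + (j : ZMod m)))) := by
  unfold edgeChosen
  congr 1
  show List.map _ ((List.range (2*t+2)).flatMap (pure ∘ fun a : ℕ => ((a : ZMod m)))) = _
  rw [List.flatMap_pure_eq_map, List.map_map]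
  rfl

lemma instance_contra (A : List ℕ → Bool) (t : ℕ) (ρ : ℝ) (N m : ℕ) [NeZero m]
    (hρ : 1 ≤ ρ) (hm : 4*t+4 ≤ m)
    (S : Finset ℕ) (hSN : S ⊆ Finset.range N) (hcard : S.card = m)
    (c : Bool) (hmono : Mono (fun T => A (T.sort (·≤·))) (2*t+2) S c)
    (hvalid : ringValid A t ρ N m)
    (hhalf : ρ * (2*t+1) < ((m/2 : ℕ) : ℝ)) : False := by
  have hρ0 : (0:ℝ) < ρ := lt_of_lt_of_le one_pos hρ
  set L := S.sort (·≤·) with hL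
  have hlen : L.length = m := by rw [hL, Finset.length_sort, hcard]
  have hsorted : L.Pairwise (·<·) := S.sortedLT_sort.pairwise
  have hnodup : L.Nodup := hsorted.nodup
  set idOf : ZMod m → ℕ := fun v => L.getD v.val 0 with hidOf
  have hvalm : ∀ v : ZMod m, v.val < L.length := by
    intro v; rw [hlen]; exact ZMod.val_lt v
  have hmemL : ∀ v : ZMod m, idOf v ∈ L := by
    intro v
    rw [hidOf]
    simp only
    rw [List.getD_eq_getElem L 0 (hvalm v)]
    exact List.getElem_mem _
  have hidlt : ∀ v, idOf v < N := by
    intro v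
    have := (Finset.mem_sort (α := ℕ) (·≤·)).1 (hmemL v)
    exact Finset.mem_range.1 (hSN this)
  have hinj : Function.Injective idOf := by
    intro v w h
    rw [hidOf] at h
    simp only at h
    rw [List.getD_eq_getElem L 0 (hvalm v), List.getD_eq_getElem L 0 (hvalm w)] at h
    have := hsorted.sortedLT.strictMono_get.injective
      (show L.get ⟨v.val, hvalm v⟩ = L.get ⟨w.val, hvalm w⟩ by simpa using h)
    have hvw : v.val = w.val := by simpa [Fin.ext_iff] using this
    exact ZMod.val_injective m hvw
  obtain ⟨hmatch, hcount⟩ := hvalid idOf hinj hidlt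
  -- evaluation of non-wrapping windows
  have hwin : ∀ e : ℕ, t ≤ e → e + t + 1 < m →
      edgeChosen A t idOf ((e : ℕ) : ZMod m) = c := by
    intro e he1 he2
    have hmap : (List.range (2*t+2)).map (fun j : ℕ => idOf (((e:ℕ) : ZMod m) - (t:ZMod m) + (j : ZMod m)))
        = (List.range (2*t+2)).map (fun j => L.getD (e - t + j) 0) := by
      apply List.map_congr_left
      intro j hj
      have hj' : j < 2*t+2 := List.mem_range.1 hj
      have hcast : ((e:ℕ) : ZMod m) - (t:ZMod m) + (j : ZMod m) = ((e - t + j : ℕ) : ZMod m) := by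
        rw [← Nat.cast_sub he1, ← Nat.cast_add]
      rw [hcast, hidOf]
      simp only
      rw [ZMod.val_cast_of_lt (show e - t + j < m by omega)]
    set w := (List.range (2*t+2)).map (fun j => L.getD (e - t + j) 0) with hw
    have hwsorted : w.Pairwise (·<·) := by
      rw [hw, List.pairwise_map]
      apply List.Pairwise.imp_of_mem ?_ List.pairwise_lt_range
      intro a b ha hb hab
      have ha' : a < 2*t+2 := List.mem_range.1 ha
      have hb' : b < 2*t+2 := List.mem_range.1 hb
      have hia : e - t + a < L.length := by rw [hlen]; omega
      have hib : e - t + b < L.length := by rw [hlen]; omega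
      rw [List.getD_eq_getElem L 0 hia, List.getD_eq_getElem L 0 hib]
      exact hsorted.sortedLT.strictMono_get (show (⟨e-t+a, hia⟩ : Fin L.length) < ⟨e-t+b, hib⟩ by
        simp [Fin.lt_def]; omega)
    have hwnodup : w.Nodup := hwsorted.nodup
    have hwlen : w.length = 2*t+2 := by simp [hw]
    have hTsub : w.toFinset ⊆ S := by
      intro x hx
      rw [List.mem_toFinset, hw] at hx
      obtain ⟨j, hj, rfl⟩ := List.mem_map.1 hx
      have hj' : j < 2*t+2 := List.mem_range.1 hj
      have hij : e - t + j < L.length := by rw [hlen]; omega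
      rw [List.getD_eq_getElem L 0 hij]
      exact (Finset.mem_sort (α := ℕ) (·≤·)).1 (List.getElem_mem _)
    have hTcard : w.toFinset.card = 2*t+2 := by
      rw [List.toFinset_card_of_nodup hwnodup, hwlen]
    have hsort_eq : w.toFinset.sort (·≤·) = w := by
      refine (fun h1 h2 h3 => List.Perm.eq_of_pairwise' h2 h3 h1) ?_ (Finset.pairwise_sort _ _) (hwsorted.imp ?_)
      · exact (Finset.sort_perm_toList _ _).trans (List.toFinset_toList hwnodup)
      · intro a b hab; exact le_of_lt hab
    have hmono' : A (w.toFinset.sort (·≤·)) = c := hmono w.toFinset hTsub hTcard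
    rw [hsort_eq] at hmono'
    rw [edgeChosen_eq, hmap]
    exact hmono'
  cases c with
  | true =>
    have h1 : edgeChosen A t idOf ((t : ℕ) : ZMod m) = true := hwin t le_rfl (by omega)
    have h2 : edgeChosen A t idOf (((t+1 : ℕ)) : ZMod m) = true := hwin (t+1) (by omega) (by omega)
    apply hmatch ((t : ℕ) : ZMod m) h1
    have : ((t : ℕ) : ZMod m) + 1 = (((t+1 : ℕ)) : ZMod m) := by push_cast; ring
    rw [this]
    exact h2
  | false =>
    set good := (Finset.Icc t (m - t - 2)).image (fun e : ℕ => ((e : ℕ) : ZMod m)) with hgood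
    have hgoodcard : good.card = m - 2*t - 1 := by
      rw [hgood, Finset.card_image_of_injOn, Nat.card_Icc]
      · omega
      · intro x hx y hy hxy
        simp only [Finset.coe_Icc, Set.mem_Icc] at hx hy
        have hx' : x < m := by omega
        have hy' : y < m := by omega
        have := congrArg ZMod.val hxy
        rwa [ZMod.val_cast_of_lt hx', ZMod.val_cast_of_lt hy'] at this
    have hsub : Finset.univ.filter (fun v : ZMod m => edgeChosen A t idOf v = true)
        ⊆ Finset.univ \ good := by
      intro v hv
      rw [Finset.mem_filter] at hv
      rw [Finset.mem_sdiff]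
      refine ⟨Finset.mem_univ v, ?_⟩
      intro hvg
      rw [hgood] at hvg
      obtain ⟨e, he, rfl⟩ := Finset.mem_image.1 hvg
      rw [Finset.mem_Icc] at he
      have := hwin e he.1 (by omega)
      rw [hv.2] at this
      exact Bool.noConfusion this
    have hcard_le : (Finset.univ.filter (fun v : ZMod m => edgeChosen A t idOf v = true)).card
        ≤ 2*t+1 := by
      have h1 := Finset.card_le_card hsub
      rw [Finset.card_sdiff_of_subset (Finset.subset_univ _)] at h1
      have h2 : (Finset.univ : Finset (ZMod m)).card = m := by
        rw [Finset.card_univ, ZMod.card]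
      omega
    -- density contradiction
    have hcast : ((Finset.univ.filter (fun v : ZMod m => edgeChosen A t idOf v = true)).card : ℝ)
        ≤ (2*t+1 : ℕ) := by exact_mod_cast hcard_le
    have h3 : ((m/2 : ℕ) : ℝ) / ρ ≤ (2*t+1 : ℕ) := le_trans hcount hcast
    rw [div_le_iff₀ hρ0] at h3
    have h4 : ((2*t+1 : ℕ) : ℝ) * ρ = ρ * (2*t+1) := by push_cast; ring
    rw [h4] at h3
    have : ((2:ℝ)*t+1) = ((2*t+1 : ℕ) : ℝ) := by push_cast; ring
    rw [this] at hhalf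
    linarith

lemma edgeChosen_zero (A : List ℕ → Bool) (m : ℕ) (id : ZMod m → ℕ) (v : ZMod m) :
    edgeChosen A 0 id v = A [id v, id (v+1)] := by
  rw [edgeChosen_eq]
  have : List.range 2 = [0, 1] := by decide
  simp [this]

lemma triple_eq (A : List ℕ → Bool) (ρ : ℝ) (N : ℕ) (hρ : 1 ≤ ρ)
    (hv : ringValid A 0 ρ N 3) (x y z : ℕ) (hx : x < N) (hy : y < N) (hz : z < N)
    (hxy : x ≠ y) (hyz : y ≠ z) (hxz : x ≠ z) :
    (if A [x,y] then 1 else 0) + (if A [y,z] then 1 else 0) + (if A [z,x] then 1 else 0) = 1 := by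
  set id : ZMod 3 → ℕ := fun v => if v = 0 then x else if v = 1 then y else z with hid
  have h0 : id 0 = x := by simp [hid]
  have h1 : id 1 = y := by norm_num [hid]
  have h2 : id 2 = z := by
    simp only [hid]
    rw [if_neg (by decide), if_neg (by decide)]
  have hinj : Function.Injective id := by
    intro a b h
    fin_cases a <;> fin_cases b <;> first | rfl | (clear h0 h1 h2; simp only [hid] at h; split_ifs at h <;> simp_all (config := {decide := true}) <;> contradiction)
  have hlt : ∀ v, id v < N := by
    intro v; fin_cases v <;> simp_all <;> split_ifs <;> assumption
  obtain ⟨hm, hc⟩ := hv id hinj hlt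
  have e0 : edgeChosen A 0 id 0 = A [x, y] := by
    rw [edgeChosen_zero]; norm_num [h0, h1]
  have e1 : edgeChosen A 0 id 1 = A [y, z] := by
    rw [edgeChosen_zero]; norm_num [h1, h2]
  have e2 : edgeChosen A 0 id 2 = A [z, x] := by
    rw [edgeChosen_zero]
    have : (2 + 1 : ZMod 3) = 0 := by decide
    rw [this, h2, h0]
  have hm0 := hm 0; have hm1 := hm 1; have hm2 := hm 2
  rw [show (0 + 1 : ZMod 3) = 1 by decide] at hm0
  rw [show (1 + 1 : ZMod 3) = 2 by decide] at hm1
  rw [show (2 + 1 : ZMod 3) = 0 by decide] at hm2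
  rw [e0, e1] at hm0
  rw [e1, e2] at hm1
  rw [e2, e0] at hm2
  -- at least one chosen
  have hpos : 0 < (Finset.univ.filter (fun v : ZMod 3 => edgeChosen A 0 id v = true)).card := by
    by_contra h
    push_neg at h
    have hcard0 : (Finset.univ.filter (fun v : ZMod 3 => edgeChosen A 0 id v = true)).card = 0 := by omega
    rw [hcard0] at hc
    have : ((3/2 : ℕ) : ℝ) = 1 := by norm_num
    rw [this] at hc
    have : (0:ℝ) < 1 / ρ := by positivity
    simp at hc
    linarith
  obtain ⟨v, hvmem⟩ := Finset.card_pos.1 hpos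
  have hvb := (Finset.mem_filter.1 hvmem).2
  have hone : A [x,y] = true ∨ A [y,z] = true ∨ A [z,x] = true := by
    fin_cases v
    · left; rw [← e0]; exact hvb
    · right; left; rw [← e1]; exact hvb
    · right; right; rw [← e2]; exact hvb
  rcases hA : A [x,y] <;> rcases hB : A [y,z] <;> rcases hC : A [z,x] <;> simp_all


lemma no_zero_round (A : List ℕ → Bool) (ρ : ℝ) (N : ℕ) (hρ : 1 ≤ ρ) (hN : 5 ≤ N)
    (hv : ringValid A 0 ρ N 3) : False := by
  have h0 := triple_eq A ρ N hρ hv 0 1 2 (by omega) (by omega) (by omega) (by norm_num) (by norm_num) (by norm_num)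
  have h1 := triple_eq A ρ N hρ hv 0 2 1 (by omega) (by omega) (by omega) (by norm_num) (by norm_num) (by norm_num)
  have h2 := triple_eq A ρ N hρ hv 0 1 3 (by omega) (by omega) (by omega) (by norm_num) (by norm_num) (by norm_num)
  have h3 := triple_eq A ρ N hρ hv 0 3 1 (by omega) (by omega) (by omega) (by norm_num) (by norm_num) (by norm_num)
  have h4 := triple_eq A ρ N hρ hv 0 1 4 (by omega) (by omega) (by omega) (by norm_num) (by norm_num) (by norm_num)
  have h5 := triple_eq A ρ N hρ hv 0 4 1 (by omega) (by omega) (by omega) (by norm_num) (by norm_num) (by norm_num)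
  have h6 := triple_eq A ρ N hρ hv 0 2 3 (by omega) (by omega) (by omega) (by norm_num) (by norm_num) (by norm_num)
  have h7 := triple_eq A ρ N hρ hv 0 3 2 (by omega) (by omega) (by omega) (by norm_num) (by norm_num) (by norm_num)
  have h8 := triple_eq A ρ N hρ hv 0 2 4 (by omega) (by omega) (by omega) (by norm_num) (by norm_num) (by norm_num)
  have h9 := triple_eq A ρ N hρ hv 0 4 2 (by omega) (by omega) (by omega) (by norm_num) (by norm_num) (by norm_num)
  have h10 := triple_eq A ρ N hρ hv 0 3 4 (by omega) (by omega) (by omega) (by norm_num) (by norm_num) (by norm_num)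
  have h11 := triple_eq A ρ N hρ hv 0 4 3 (by omega) (by omega) (by omega) (by norm_num) (by norm_num) (by norm_num)
  have h12 := triple_eq A ρ N hρ hv 1 2 3 (by omega) (by omega) (by omega) (by norm_num) (by norm_num) (by norm_num)
  have h13 := triple_eq A ρ N hρ hv 1 3 2 (by omega) (by omega) (by omega) (by norm_num) (by norm_num) (by norm_num)
  have h14 := triple_eq A ρ N hρ hv 1 2 4 (by omega) (by omega) (by omega) (by norm_num) (by norm_num) (by norm_num)
  have h15 := triple_eq A ρ N hρ hv 1 4 2 (by omega) (by omega) (by omega) (by norm_num) (by norm_num) (by norm_num)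
  have h16 := triple_eq A ρ N hρ hv 1 3 4 (by omega) (by omega) (by omega) (by norm_num) (by norm_num) (by norm_num)
  have h17 := triple_eq A ρ N hρ hv 1 4 3 (by omega) (by omega) (by omega) (by norm_num) (by norm_num) (by norm_num)
  have h18 := triple_eq A ρ N hρ hv 2 3 4 (by omega) (by omega) (by omega) (by norm_num) (by norm_num) (by norm_num)
  have h19 := triple_eq A ρ N hρ hv 2 4 3 (by omega) (by omega) (by omega) (by norm_num) (by norm_num) (by norm_num)
  omega

lemma main_bound (n t : ℕ) (A : List ℕ → Bool) (ρ : ℝ) (hn : 3 ≤ n) (hρ : 1 ≤ ρ)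
    (hvalid : ∀ m : ℕ, 3 ≤ m → m ≤ n → ∀ [NeZero m], ringValid A t ρ (n ^ 3) m) :
    logStar n ≤ 16 * (Nat.ceil ρ) * (t+1) := by
  set R := Nat.ceil ρ with hR
  have hR1 : 1 ≤ R := Nat.one_le_ceil_iff.2 (by linarith)
  set m := 2*(R*(2*t+1)+1) with hm
  have haux : 2*t+1 ≤ R*(2*t+1) := Nat.le_mul_of_pos_left _ (by omega)
  have hm44 : 4*t+4 ≤ m := by omega
  have e1 : m = 2*(R*t)*2 + 2*R + 2 := by rw [hm]; ring
  have e2 : 16*R*(t+1) = 16*(R*t)+16*R := by ring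
  have ht' : t ≤ R*t := Nat.le_mul_of_pos_left t (by omega)
  by_cases hmn : m ≤ n
  · by_cases hram : Rnum (2*t+2) m ≤ n^3
    · exfalso
      obtain ⟨S, c, hS, hScard, hmono⟩ := ramsey (2*t+2) (by omega) m
        (fun T => A (T.sort (·≤·))) (Finset.range (n^3))
        (by simpa [Finset.card_range] using hram)
      haveI : NeZero m := ⟨by omega⟩
      apply instance_contra A t ρ (n^3) m hρ hm44 S hS hScard c hmono
        (hvalid m (by omega) hmn)
      have hhalfnat : m/2 = R*(2*t+1)+1 := by omega
      rw [hhalfnat]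
      push_cast
      have h1 : ρ ≤ (R:ℝ) := Nat.le_ceil ρ
      have h2 : ρ * (2*(t:ℝ)+1) ≤ (R:ℝ) * (2*(t:ℝ)+1) :=
        mul_le_mul_of_nonneg_right h1 (by positivity)
      linarith
    · push_neg at hram
      have h2 := Rnum_le_twr (2*t+2) (by omega) m
      have h3 : logStar (n^3) ≤ logStar (twr (3*(2*t+2)) (2*m+2)) :=
        logStar_mono _ _ (by omega)
      have h4 : logStar (twr (3*(2*t+2)) (2*m+2)) ≤ 3*(2*t+2) + logStar (2*m+2) :=
        logStar_twr_le (by omega) _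
      have h5 : logStar (2*m+2) ≤ 2*m+2 := logStar_le_self _
      have h6 : logStar n ≤ logStar (n^3) :=
        logStar_mono _ _ (Nat.le_self_pow (by norm_num) n)
      omega
  · push_neg at hmn
    have h1 : logStar n ≤ n := logStar_le_self n
    omega

/-- Linial-type lower bound: any deterministic LOCAL algorithm computing a `ρ`-approximate
maximum cardinality matching on rings of up to `n` vertices requires `Ω((log* n)/ρ)`
rounds. -/
theorem stmt16 : ∃ C : ℝ, 0 < C ∧
    ∀ (n t : ℕ) (A : List ℕ → Bool) (ρ : ℝ),
      3 ≤ n → 1 ≤ ρ →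
      (∀ m : ℕ, 3 ≤ m → m ≤ n → ∀ [NeZero m], ringValid A t ρ (n ^ 3) m) →
      C * (logStar n : ℝ) / ρ ≤ (t : ℝ) := by
  refine ⟨1/64, by norm_num, ?_⟩
  intro n t A ρ hn hρ hvalid
  have hρ0 : (0:ℝ) < ρ := by linarith
  rcases Nat.eq_zero_or_pos t with rfl | ht
  · exfalso
    have h27 : 27 ≤ n^3 := by
      calc (27:ℕ) = 3^3 := by norm_num
        _ ≤ n^3 := Nat.pow_le_pow_left hn 3
    exact no_zero_round A ρ (n^3) hρ (by omega) (hvalid 3 le_rfl hn)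
  · have hb := main_bound n t A ρ hn hρ hvalid
    have h1 : (logStar n : ℝ) ≤ 16 * (Nat.ceil ρ : ℝ) * ((t:ℝ)+1) := by
      exact_mod_cast hb
    have h2 : (Nat.ceil ρ : ℝ) ≤ 2*ρ := by
      have := Nat.ceil_lt_add_one (show (0:ℝ) ≤ ρ by linarith)
      linarith
    have h3 : ((t:ℝ)+1) ≤ 2*t := by
      have : (1:ℝ) ≤ (t:ℝ) := by exact_mod_cast ht
      linarith
    have hc0 : (0:ℝ) ≤ (Nat.ceil ρ : ℝ) := by positivity
    have q1 : 16 * (Nat.ceil ρ : ℝ) * ((t:ℝ)+1) ≤ 16*(2*ρ) * ((t:ℝ)+1) :=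
      mul_le_mul_of_nonneg_right (by linarith) (by positivity)
    have q2 : 16*(2*ρ) * ((t:ℝ)+1) ≤ 16*(2*ρ) * (2*(t:ℝ)) :=
      mul_le_mul_of_nonneg_left h3 (by positivity)
    have q3 : 16*(2*ρ) * (2*(t:ℝ)) = 64*ρ*(t:ℝ) := by ring
    have h4 : (logStar n : ℝ) ≤ 64 * ρ * t := by linarith
    rw [div_le_iff₀ hρ0]
    linarith
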